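/- Let A, B ∈ ℤ with 0 < A ≤ B, B ≥ 2, 2A − B = 3 and A ≠ B, let M = [[0, −B], [1, −A]] acting on ℝ², and let T be the tile for M and digits {0, …, B−1}·e₁. For digits a₁, a₂, a₃, a₄, a₁', a₂', a₃', a₄' ∈ {0, …, B−1} with a₁ − a₁' = 1 and a₂ − a₂' = A−1, the subdivision pieces T_{a₁a₂a₃a₄} and T_{a₁'a₂'a₃'a₄'} have nonempty intersection if and only if one of the following holds: (a) a₃ − a₃' = B−A, a₄ = 0 and a₄' = B−1; (b) a₃ − a₃' = B−A+1 and a₄ − a₄' ∈ {A−B, A−B−1, A−B−2}; (c) a₃ − a₃' = B−A+2 and a₄ − a₄' = 1. -/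

import Mathlib

noncomputable section

/-- The matrix `[[0, -B], [1, -A]]` as a real matrix. -/
def M' (A B : ℤ) : Matrix (Fin 2) (Fin 2) ℝ := !![0, -(B : ℝ); 1, -(A : ℝ)]

/-- `e₁ = (1, 0) ∈ ℝ²`. -/
def e1 : Fin 2 → ℝ := ![1, 0]

/-- The subdivision piece `T_{a₁…a_m} = M⁻¹(a₁e₁) + ⋯ + M^{-m}(a_m e₁) + M^{-m}·T`. -/
def subPiece (A B : ℤ) (T : Set (Fin 2 → ℝ)) {m : ℕ} (a : Fin m → ℤ) :
    Set (Fin 2 → ℝ) :=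
  (fun x => (∑ i : Fin m, ((M' A B)⁻¹ ^ ((i : ℕ) + 1)).mulVec ((a i : ℝ) • e1))
    + ((M' A B)⁻¹ ^ m).mulVec x) '' T

set_option maxHeartbeats 1000000

/-- Explicit inverse of `M'`. -/
def Kinv (A B : ℤ) : Matrix (Fin 2) (Fin 2) ℝ := !![-(A:ℝ)/B, 1; -(1:ℝ)/B, 0]

/-- Vector with integer entries. -/
def rv (p q : ℤ) : Fin 2 → ℝ := ![(p:ℝ), (q:ℝ)]

/-- Intersection predicate: `T ∩ (T + (p,q)) ≠ ∅`. -/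
def SZ (A B : ℤ) (T : Set (Fin 2 → ℝ)) (p q : ℤ) : Prop :=
  ∃ x, x ∈ T ∧ x + rv p q ∈ T

lemma K_mul_Kinv (A B : ℤ) (hB : (B:ℝ) ≠ 0) : (M' A B) * (Kinv A B) = 1 := by
  ext i j
  fin_cases i <;> fin_cases j <;>
    (simp [M', Kinv, Matrix.mul_apply, Fin.sum_univ_two]; try field_simp; try ring)

lemma Minv_eq (A B : ℤ) (hB : (B:ℝ) ≠ 0) : (M' A B)⁻¹ = Kinv A B :=
  Matrix.inv_eq_right_inv (K_mul_Kinv A B hB)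

lemma Kinv_mul_K (A B : ℤ) (hB : (B:ℝ) ≠ 0) : (Kinv A B) * (M' A B) = 1 := by
  ext i j
  fin_cases i <;> fin_cases j <;>
    (simp [M', Kinv, Matrix.mul_apply, Fin.sum_univ_two]; try field_simp; try ring)

lemma K_inj (A B : ℤ) (hB : (B:ℝ) ≠ 0) {x y : Fin 2 → ℝ}
    (h : (M' A B).mulVec x = (M' A B).mulVec y) : x = y := by
  have := congrArg (fun u => (Kinv A B).mulVec u) h
  simp only [Matrix.mulVec_mulVec, Kinv_mul_K A B hB, Matrix.one_mulVec] at this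
  exact this

lemma Kinv_sq (A B : ℤ) (hB : (B:ℝ) ≠ 0) :
    Kinv A B ^ 2 = !![((A:ℝ)^2 - B)/B^2, -(A:ℝ)/B; (A:ℝ)/B^2, -1/B] := by
  rw [sq]
  ext i j
  fin_cases i <;> fin_cases j <;>
    (simp only [Kinv, Matrix.mul_apply, Fin.sum_univ_two, Matrix.cons_val', Matrix.cons_val_zero,
      Matrix.cons_val_one, Matrix.head_cons, Matrix.empty_val', Matrix.cons_val_fin_one,
      Matrix.head_fin_const, Matrix.of_apply, Fin.zero_eta, Fin.mk_one]; field_simp; try ring; try (left; ring); try (left; trivial))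

lemma Kinv_cube (A B : ℤ) (hB : (B:ℝ) ≠ 0) :
    Kinv A B ^ 3 = !![(2*A*B - (A:ℝ)^3)/B^3, ((A:ℝ)^2*B - B^2)/B^3;
                      ((B:ℝ) - A^2)/B^3, (A:ℝ)/B^2] := by
  rw [pow_succ, Kinv_sq A B hB]
  ext i j
  fin_cases i <;> fin_cases j <;>
    (simp only [Kinv, Matrix.mul_apply, Fin.sum_univ_two, Matrix.cons_val', Matrix.cons_val_zero,
      Matrix.cons_val_one, Matrix.head_cons, Matrix.empty_val', Matrix.cons_val_fin_one,
      Matrix.head_fin_const, Matrix.of_apply, Fin.zero_eta, Fin.mk_one]; field_simp; try ring; try (left; ring); try (left; trivial))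

lemma Kinv_four (A B : ℤ) (hB : (B:ℝ) ≠ 0) :
    Kinv A B ^ 4 = !![((B:ℝ)^2 - 3*A^2*B + A^4)/B^4, (2*A*B^2 - (A:ℝ)^3*B)/B^4;
                      ((A:ℝ)^3 - 2*A*B)/B^4, ((B:ℝ)^2 - A^2*B)/B^4] := by
  rw [pow_succ, Kinv_cube A B hB]
  ext i j
  fin_cases i <;> fin_cases j <;>
    (simp only [Kinv, Matrix.mul_apply, Fin.sum_univ_two, Matrix.cons_val', Matrix.cons_val_zero,
      Matrix.cons_val_one, Matrix.head_cons, Matrix.empty_val', Matrix.cons_val_fin_one,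
      Matrix.head_fin_const, Matrix.of_apply, Fin.zero_eta, Fin.mk_one]; field_simp; try ring; try (left; ring); try (left; trivial))

/-- The central algebraic identity relating the two subdivision maps. -/
lemma key (A B : ℤ) (hB : (B:ℝ) ≠ 0) (a₁ a₂ a₃ a₄ a₁' a₂' a₃' a₄' : ℤ)
    (hd1 : a₁ - a₁' = 1) (hd2 : a₂ - a₂' = A - 1) (x : Fin 2 → ℝ) :
    (∑ i : Fin 4, ((M' A B)⁻¹ ^ ((i:ℕ)+1)).mulVec ((![a₁',a₂',a₃',a₄'] i : ℝ) • e1))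
      + ((M' A B)⁻¹ ^ 4).mulVec (x + rv (B + (a₄ - a₄')) (A - B + (a₃ - a₃')))
    = (∑ i : Fin 4, ((M' A B)⁻¹ ^ ((i:ℕ)+1)).mulVec ((![a₁,a₂,a₃,a₄] i : ℝ) • e1))
      + ((M' A B)⁻¹ ^ 4).mulVec x := by
  have h1 : (a₁ : ℝ) = a₁' + 1 := by
    have : a₁ = a₁' + 1 := by omega
    exact_mod_cast congrArg (Int.cast : ℤ → ℝ) this
  have h2 : (a₂ : ℝ) = a₂' + A - 1 := by
    have : a₂ = a₂' + A - 1 := by omega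
    exact_mod_cast congrArg (Int.cast : ℤ → ℝ) this
  rw [Minv_eq A B hB, Fin.sum_univ_four, Fin.sum_univ_four]
  rw [show ((0:Fin 4):ℕ) + 1 = 1 from rfl, show ((1:Fin 4):ℕ) + 1 = 2 from rfl,
      show ((2:Fin 4):ℕ) + 1 = 3 from rfl, show ((3:Fin 4):ℕ) + 1 = 4 from rfl]
  rw [pow_one, Kinv_sq A B hB, Kinv_cube A B hB, Kinv_four A B hB]
  funext i
  fin_cases i <;>
  · simp [Kinv, Matrix.mulVec, dotProduct, Fin.sum_univ_two, e1, rv,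
      Matrix.vecHead, Matrix.vecTail, Function.comp, h1, h2]
    push_cast
    field_simp
    ring

lemma K_rv (A B p q : ℤ) : (M' A B).mulVec (rv p q) = rv (-B*q) (p - A*q) := by
  funext i
  fin_cases i <;>
    (simp [M', Matrix.mulVec, dotProduct, Fin.sum_univ_two, rv,
      Matrix.vecHead, Matrix.vecTail, Function.comp]; try push_cast; try ring)

lemma mulVec_shift (A B p q δ : ℤ) (x : Fin 2 → ℝ) :
    (M' A B).mulVec (x + rv p q) + ((δ:ℝ)) • e1
      = (M' A B).mulVec x + rv (-B*q + δ) (p - A*q) := by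
  rw [Matrix.mulVec_add, K_rv]
  funext i
  fin_cases i <;> (simp [rv, e1, Matrix.vecHead, Matrix.vecTail, Function.comp]; try push_cast; try ring)

section step
variable {A B : ℤ} {T : Set (Fin 2 → ℝ)}

lemma up (hT : (M' A B).mulVec '' T =
      ⋃ j ∈ Set.Icc (0 : ℤ) (B - 1), (fun x => x + (j : ℝ) • e1) '' T)
    {x : Fin 2 → ℝ} (hx : x ∈ T) :
    ∃ j : ℤ, j ∈ Set.Icc (0:ℤ) (B-1) ∧ ∃ y ∈ T, (M' A B).mulVec x = y + (j:ℝ) • e1 := by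
  have h : (M' A B).mulVec x ∈ (M' A B).mulVec '' T := ⟨x, hx, rfl⟩
  rw [hT] at h
  simp only [Set.mem_iUnion, Set.mem_image] at h
  obtain ⟨j, hj, y, hy, hxy⟩ := h
  exact ⟨j, hj, y, hy, hxy.symm⟩

lemma down (hT : (M' A B).mulVec '' T =
      ⋃ j ∈ Set.Icc (0 : ℤ) (B - 1), (fun x => x + (j : ℝ) • e1) '' T)
    {y : Fin 2 → ℝ} (hy : y ∈ T) {j : ℤ} (hj : j ∈ Set.Icc (0:ℤ) (B-1)) :
    ∃ z ∈ T, (M' A B).mulVec z = y + (j:ℝ) • e1 := by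
  have h : y + (j:ℝ) • e1 ∈ ⋃ j ∈ Set.Icc (0 : ℤ) (B - 1), (fun x => x + (j : ℝ) • e1) '' T := by
    simp only [Set.mem_iUnion, Set.mem_image]
    exact ⟨j, hj, y, hy, rfl⟩
  rw [← hT] at h
  obtain ⟨z, hz, hzy⟩ := h
  exact ⟨z, hz, hzy⟩

lemma SZ_step (hT : (M' A B).mulVec '' T =
      ⋃ j ∈ Set.Icc (0 : ℤ) (B - 1), (fun x => x + (j : ℝ) • e1) '' T)
    {p q : ℤ} (h : SZ A B T p q) :
    ∃ δ : ℤ, |δ| ≤ B - 1 ∧ SZ A B T (-B*q + δ) (p - A*q) := by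
  obtain ⟨x, hx, hxv⟩ := h
  obtain ⟨j, hj, y, hy, hMx⟩ := up hT hx
  obtain ⟨j', hj', y', hy', hMxv⟩ := up hT hxv
  simp only [Set.mem_Icc] at hj hj'
  refine ⟨j - j', by rw [abs_le]; omega, y, hy, ?_⟩
  have e : y + rv (-B*q + (j - j')) (p - A*q) = y' := by
    have := mulVec_shift A B p q (j - j') x
    rw [hMx, hMxv] at this
    funext i
    have h2 := congrFun this i
    simp only [Pi.add_apply, Pi.smul_apply, smul_eq_mul] at h2 ⊢
    push_cast at h2 ⊢
    linarith
  rw [e]; exact hy'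

lemma SZ_pre (hT : (M' A B).mulVec '' T =
      ⋃ j ∈ Set.Icc (0 : ℤ) (B - 1), (fun x => x + (j : ℝ) • e1) '' T)
    (hB : (B:ℝ) ≠ 0)
    {p q δ : ℤ} (hδ : |δ| ≤ B - 1) (h : SZ A B T (-B*q + δ) (p - A*q)) :
    SZ A B T p q := by
  obtain ⟨y, hy, hyw⟩ := h
  have hδ' := abs_le.mp hδ
  have hjm : max δ 0 ∈ Set.Icc (0:ℤ) (B-1) := by simp only [Set.mem_Icc]; omega
  have hjm' : max δ 0 - δ ∈ Set.Icc (0:ℤ) (B-1) := by simp only [Set.mem_Icc]; omega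
  obtain ⟨z, hz, hzy⟩ := down hT hy hjm
  obtain ⟨z', hz', hzy'⟩ := down hT hyw hjm'
  refine ⟨z, hz, ?_⟩
  have e : z' = z + rv p q := by
    apply K_inj A B hB
    rw [Matrix.mulVec_add, hzy', hzy, K_rv]
    funext i
    fin_cases i <;> (simp [rv, e1, Matrix.vecHead, Matrix.vecTail, Function.comp]; try push_cast; try ring)
  rw [← e]; exact hz'

lemma SZ_neg {p q : ℤ} (h : SZ A B T p q) : SZ A B T (-p) (-q) := by
  obtain ⟨x, hx, hxv⟩ := h
  refine ⟨x + rv p q, hxv, ?_⟩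
  have : x + rv p q + rv (-p) (-q) = x := by
    funext i; fin_cases i <;> (simp [rv, Matrix.vecHead, Matrix.vecTail, Function.comp]; try push_cast; try ring)
  rw [this]; exact hx

lemma q_bound (hTcp : IsCompact T) :
    ∃ N : ℕ, ∀ p q : ℤ, SZ A B T p q → q.natAbs ≤ N := by
  obtain ⟨R, hR⟩ := hTcp.isBounded.exists_norm_le
  refine ⟨⌊2*|R|⌋₊, ?_⟩
  rintro p q ⟨x, hx, hxv⟩
  have h1 : |x 1| ≤ |R| := le_trans (le_trans (norm_le_pi_norm x 1) (hR x hx)) (le_abs_self R)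
  have h2 : |(x + rv p q) 1| ≤ |R| :=
    le_trans (le_trans (norm_le_pi_norm (x + rv p q) 1) (hR _ hxv)) (le_abs_self R)
  have e : (x + rv p q) 1 = x 1 + (q:ℝ) := by simp [rv]
  rw [e] at h2
  apply Nat.le_floor
  have : |(q:ℝ)| ≤ 2*|R| := by
    rw [abs_le] at h1 h2 ⊢; constructor <;> linarith
  calc ((q.natAbs : ℕ) : ℝ) = |(q:ℝ)| := by
        push_cast [Nat.cast_natAbs]; norm_num
    _ ≤ 2*|R| := this

end step

lemma SZ_q_le3 {A B : ℤ} {T : Set (Fin 2 → ℝ)}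
    (hA : 4 ≤ A) (hBA : B = 2*A - 3)
    (hT : (M' A B).mulVec '' T =
      ⋃ j ∈ Set.Icc (0 : ℤ) (B - 1), (fun x => x + (j : ℝ) • e1) '' T)
    (hTcp : IsCompact T) {p q : ℤ} (h : SZ A B T p q) : |q| ≤ 3 := by
  obtain ⟨N, hN⟩ := q_bound (A := A) (B := B) hTcp
  set s : Set ℕ := {n | ∃ p q : ℤ, SZ A B T p q ∧ q.natAbs = n} with hs
  have hne : s.Nonempty := ⟨q.natAbs, p, q, h, rfl⟩
  have hbdd : BddAbove s := by
    refine ⟨N, ?_⟩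
    rintro n ⟨p', q', h', rfl⟩
    exact hN p' q' h'
  obtain ⟨c, hcs, hcmax⟩ : ∃ c, c ∈ s ∧ ∀ n ∈ s, n ≤ c :=
    ⟨sSup s, Nat.sSup_mem hne hbdd, fun n hn => le_csSup hbdd hn⟩
  obtain ⟨p₀, q₀, h₀, hq₀⟩ := hcs
  obtain ⟨δ₀, hδ₀, h₁⟩ := SZ_step hT h₀
  obtain ⟨δ₁, hδ₁, h₂⟩ := SZ_step hT h₁
  obtain ⟨δ₂, hδ₂, h₃⟩ := SZ_step hT h₂
  set q₁ := p₀ - A*q₀ with e1'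
  set q₂ := -B*q₀ + δ₀ - A*q₁ with e2'
  set q₃ := -B*q₁ + δ₁ - A*q₂ with e3'
  have le_c : ∀ p' q' : ℤ, SZ A B T p' q' → |q'| ≤ (c:ℤ) := by
    intro p' q' h'
    have hle : q'.natAbs ≤ c := hcmax _ ⟨p', q', h', rfl⟩
    rw [Int.abs_eq_natAbs]
    exact_mod_cast hle
  have hq2 : |q₂| ≤ (c:ℤ) := le_c _ _ h₂
  have hq3 : |q₃| ≤ (c:ℤ) := le_c _ _ h₃
  have hq0 : |q₀| = (c:ℤ) := by rw [Int.abs_eq_natAbs, hq₀]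
  have hid : B*B*q₀ = B*δ₀ - A*δ₁ + (A*A - B)*q₂ + A*q₃ := by
    linear_combination (-B) * e2' + A * e3'
  have hc3 : (c:ℤ) ≤ 3 := by
    by_contra hcon
    push_neg at hcon
    have hc4 : (4:ℤ) ≤ (c:ℤ) := by omega
    rw [abs_le] at hδ₀ hδ₁ hq2 hq3
    have hAB : 0 ≤ A*A - B := by nlinarith
    have hA0 : (0:ℤ) ≤ A := by omega
    have hB0 : (0:ℤ) ≤ B := by omega
    have t1u : (A*A - B) * q₂ ≤ (A*A - B) * (c:ℤ) := mul_le_mul_of_nonneg_left hq2.2 hAB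
    have t1l : (A*A - B) * (-(c:ℤ)) ≤ (A*A - B) * q₂ := mul_le_mul_of_nonneg_left hq2.1 hAB
    have t2u : A * q₃ ≤ A * (c:ℤ) := mul_le_mul_of_nonneg_left hq3.2 hA0
    have t2l : A * (-(c:ℤ)) ≤ A * q₃ := mul_le_mul_of_nonneg_left hq3.1 hA0
    have t3u : B * δ₀ ≤ B * (B-1) := mul_le_mul_of_nonneg_left hδ₀.2 hB0
    have t3l : B * (-(B-1)) ≤ B * δ₀ := mul_le_mul_of_nonneg_left hδ₀.1 hB0
    have t4u : A * δ₁ ≤ A * (B-1) := mul_le_mul_of_nonneg_left hδ₁.2 hA0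
    have t4l : A * (-(B-1)) ≤ A * δ₁ := mul_le_mul_of_nonneg_left hδ₁.1 hA0
    have hub : B*B*(c:ℤ) ≤ B*(B-1) + A*(B-1) + (A*A - B)*(c:ℤ) + A*(c:ℤ) := by
      rw [abs_eq (by positivity : (0:ℤ) ≤ (c:ℤ))] at hq0
      rcases hq0 with h0 | h0 <;> rw [h0] at hid <;> nlinarith [hid]
    have hpos : (0:ℤ) ≤ 3*A*A - 11*A + 6 := by nlinarith
    have hmul : (3*A*A - 11*A + 6) * 4 ≤ (3*A*A - 11*A + 6) * (c:ℤ) :=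
      mul_le_mul_of_nonneg_left hc4 hpos
    nlinarith [hub, hmul, sq_nonneg (A-4)]
  have := le_c _ _ h
  omega

set_option maxHeartbeats 2000000 in
lemma E11 (A B q0 q1 q2 q3 q4 : ℤ) (hA : 4 ≤ A) (hB : B = 2*A-3)
    (b0 : |q0| ≤ 3) (b1 : |q1| ≤ 3) (b2 : |q2| ≤ 3) (b3 : |q3| ≤ 3) (b4 : |q4| ≤ 3)
    (h0 : |B*q0 + A*q1 + q2| ≤ B-1) (h1 : |B*q1 + A*q2 + q3| ≤ B-1)
    (h2 : |B*q2 + A*q3 + q4| ≤ B-1) :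
    (q0 = 0 ∧ -1 ≤ q1 ∧ q1 ≤ 1) ∨ (q0 = 1 ∧ -2 ≤ q1 ∧ q1 ≤ 0) ∨
    (q0 = -1 ∧ 0 ≤ q1 ∧ q1 ≤ 2) ∨ (q0 = 2 ∧ q1 = -2) ∨ (q0 = -2 ∧ q1 = 2) := by
  subst hB
  rw [abs_le] at b0 b1 b2 b3 b4 h0 h1 h2
  obtain ⟨b0l, b0r⟩ := b0
  obtain ⟨b1l, b1r⟩ := b1
  interval_cases q0 <;> interval_cases q1 <;>
    first
      | omega
      | (obtain ⟨b2l, b2r⟩ := b2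
         interval_cases q2 <;>
           first
             | omega
             | (obtain ⟨b3l, b3r⟩ := b3
                interval_cases q3 <;> omega))

def phi (u : Fin 2 → ℝ) : ℝ := max |u 0| (2 * |u 1|)

lemma phi_nonneg (u : Fin 2 → ℝ) : 0 ≤ phi u :=
  le_trans (abs_nonneg _) (le_max_left _ _)

lemma abs_le_phi (u : Fin 2 → ℝ) (i : Fin 2) : |u i| ≤ phi u := by
  fin_cases i
  · exact le_max_left _ _
  · refine le_trans ?_ (le_max_right _ _)
    show |u 1| ≤ 2 * |u 1|
    have := abs_nonneg (u 1)
    linarith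

lemma contract {A B : ℤ} (hA : 4 ≤ A) (hBA : B = 2*A - 3) (u : Fin 2 → ℝ) :
    phi (((Kinv A B) * (Kinv A B)).mulVec u) ≤ (21/25) * phi u := by
  have hA' : (4:ℝ) ≤ (A:ℝ) := by exact_mod_cast hA
  have hB' : (B:ℝ) = 2*(A:ℝ) - 3 := by rw [hBA]; push_cast; ring
  have hB0 : (0:ℝ) < (B:ℝ) := by linarith
  have hBne : (B:ℝ) ≠ 0 := ne_of_gt hB0
  have hc1 : (0:ℝ) ≤ (A:ℝ)^2 - B := by nlinarith
  have hcAB : (0:ℝ) ≤ (A:ℝ)*B := by nlinarith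
  have hm0 : |u 0| ≤ phi u := abs_le_phi u 0
  have hm1 : 2 * |u 1| ≤ phi u := le_max_right _ _
  have hphi : 0 ≤ phi u := phi_nonneg u
  have habs0 := abs_nonneg (u 0)
  have habs1 := abs_nonneg (u 1)
  have E0 : (B:ℝ)^2 * (((Kinv A B) * (Kinv A B)).mulVec u) 0
      = ((A:ℝ)^2 - B) * u 0 - (A*B) * u 1 := by
    simp [Kinv, Matrix.mul_apply, Matrix.mulVec, dotProduct, Fin.sum_univ_two,
      Matrix.vecHead, Matrix.vecTail, Function.comp]
    field_simp
    ring
  have E1 : (B:ℝ)^2 * (((Kinv A B) * (Kinv A B)).mulVec u) 1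
      = (A:ℝ) * u 0 - B * u 1 := by
    simp [Kinv, Matrix.mul_apply, Matrix.mulVec, dotProduct, Fin.sum_univ_two,
      Matrix.vecHead, Matrix.vecTail, Function.comp]
    field_simp
    ring
  have key0 : 50*((A:ℝ)^2 - B) + 25*(A*B) ≤ 42*(B:ℝ)^2 := by nlinarith [sq_nonneg ((A:ℝ)-4)]
  have key1 : 50*(A:ℝ) + 25*(B:ℝ) ≤ 21*(B:ℝ)^2 := by nlinarith [sq_nonneg ((A:ℝ)-4)]
  have bound : ∀ (a b : ℝ), 0 ≤ a → 0 ≤ b → |a * u 0 - b * u 1| ≤ a * |u 0| + b * |u 1| := by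
    intro a b ha hb
    rw [sub_eq_add_neg]
    refine (abs_add_le _ _).trans ?_
    rw [abs_neg, abs_mul, abs_mul, abs_of_nonneg ha, abs_of_nonneg hb]
  have B2pos : (0:ℝ) < (B:ℝ)^2 := by positivity
  apply max_le
  · rw [← mul_le_mul_iff_right₀ B2pos, ← abs_of_pos B2pos, ← abs_mul, E0]
    calc |((A:ℝ)^2 - B) * u 0 - (A*B) * u 1|
        ≤ ((A:ℝ)^2 - B) * |u 0| + (A*B) * |u 1| := bound _ _ hc1 hcAB
      _ ≤ |(B:ℝ)^2| * (21/25 * phi u) := by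
          rw [abs_of_pos B2pos]
          nlinarith [mul_nonneg hphi
            (by linarith : (0:ℝ) ≤ 42*(B:ℝ)^2 - 50*((A:ℝ)^2-B) - 25*(A*B))]
  · rw [← mul_le_mul_iff_right₀ B2pos]
    have : (B:ℝ)^2 * (2 * |(((Kinv A B) * (Kinv A B)).mulVec u) 1|)
        = 2 * |(B:ℝ)^2 * (((Kinv A B) * (Kinv A B)).mulVec u) 1| := by
      rw [abs_mul, abs_of_pos B2pos]; ring
    rw [this, E1]
    calc 2*|(A:ℝ) * u 0 - (B:ℝ) * u 1|
        ≤ 2*((A:ℝ) * |u 0| + (B:ℝ) * |u 1|) := by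
          have := bound (A:ℝ) (B:ℝ) (by linarith) (le_of_lt hB0); linarith
      _ ≤ (B:ℝ)^2 * (21/25 * phi u) := by
          nlinarith [mul_nonneg hphi
            (by linarith : (0:ℝ) ≤ 21*(B:ℝ)^2 - 50*(A:ℝ) - 25*(B:ℝ))]

lemma stepIn {A B : ℤ} {T : Set (Fin 2 → ℝ)} (hT : (M' A B).mulVec '' T =
      ⋃ j ∈ Set.Icc (0 : ℤ) (B - 1), (fun x => x + (j : ℝ) • e1) '' T)
    (hB : (B:ℝ) ≠ 0) {y : Fin 2 → ℝ} (hy : y ∈ T) {j : ℤ}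
    (hj : j ∈ Set.Icc (0:ℤ) (B-1)) :
    (Kinv A B).mulVec (y + (j:ℝ) • e1) ∈ T := by
  obtain ⟨z, hz, hzy⟩ := down hT hy hj
  have : (Kinv A B).mulVec ((M' A B).mulVec z) = z := by
    rw [Matrix.mulVec_mulVec, Kinv_mul_K A B hB, Matrix.one_mulVec]
  rw [← hzy, this]
  exact hz

lemma fix_mem {A B : ℤ} {T : Set (Fin 2 → ℝ)} (hA : 4 ≤ A) (hBA : B = 2*A - 3)
    (hT : (M' A B).mulVec '' T =
      ⋃ j ∈ Set.Icc (0 : ℤ) (B - 1), (fun x => x + (j : ℝ) • e1) '' T)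
    (hTne : T.Nonempty) (hTcp : IsCompact T)
    {j₁ j₂ : ℤ} (hj₁ : j₁ ∈ Set.Icc (0:ℤ) (B-1)) (hj₂ : j₂ ∈ Set.Icc (0:ℤ) (B-1))
    {x : Fin 2 → ℝ}
    (hx : x = (Kinv A B).mulVec ((Kinv A B).mulVec (x + (j₂:ℝ) • e1) + (j₁:ℝ) • e1)) :
    x ∈ T := by
  have hB0 : (0:ℝ) < (B:ℝ) := by
    have h5 : (5:ℤ) ≤ B := by omega
    have : (5:ℝ) ≤ (B:ℝ) := by exact_mod_cast h5
    linarith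
  have hBne : (B:ℝ) ≠ 0 := ne_of_gt hB0
  set g : (Fin 2 → ℝ) → (Fin 2 → ℝ) :=
    fun y => (Kinv A B).mulVec ((Kinv A B).mulVec (y + (j₂:ℝ) • e1) + (j₁:ℝ) • e1) with hg
  have hgT : ∀ y ∈ T, g y ∈ T := fun y hy => stepIn hT hBne (stepIn hT hBne hy hj₂) hj₁
  have hgdiff : ∀ y : Fin 2 → ℝ, g y - x = ((Kinv A B) * (Kinv A B)).mulVec (y - x) := by
    intro y
    conv_lhs => rw [hx, hg]
    simp only []
    rw [← Matrix.mulVec_mulVec, ← Matrix.mulVec_sub]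
    congr 1
    rw [add_sub_add_right_eq_sub, ← Matrix.mulVec_sub, add_sub_add_right_eq_sub]
  obtain ⟨y₀, hy₀⟩ := hTne
  set Y : ℕ → (Fin 2 → ℝ) := fun n => g^[n] y₀ with hY
  have hYT : ∀ n, Y n ∈ T := by
    intro n
    induction n with
    | zero => simpa [hY] using hy₀
    | succ n ih =>
      have : Y (n+1) = g (Y n) := by
        simp [hY, Function.iterate_succ_apply']
      rw [this]; exact hgT _ ih
  have hYdist : ∀ n, phi (Y n - x) ≤ (21/25:ℝ)^n * phi (y₀ - x) := by
    intro n
    induction n with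
    | zero => simp [hY]
    | succ n ih =>
      have hstep : Y (n+1) - x = ((Kinv A B) * (Kinv A B)).mulVec (Y n - x) := by
        have : Y (n+1) = g (Y n) := by simp [hY, Function.iterate_succ_apply']
        rw [this, hgdiff]
      rw [hstep]
      calc phi (((Kinv A B) * (Kinv A B)).mulVec (Y n - x)) ≤ (21/25) * phi (Y n - x) :=
            contract hA hBA _
        _ ≤ (21/25) * ((21/25:ℝ)^n * phi (y₀ - x)) := by
            have : (0:ℝ) ≤ 21/25 := by norm_num
            nlinarith [ih]
        _ = (21/25:ℝ)^(n+1) * phi (y₀ - x) := by ring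
  have htend : Filter.Tendsto Y Filter.atTop (nhds x) := by
    rw [tendsto_iff_dist_tendsto_zero]
    apply squeeze_zero (fun n => dist_nonneg)
      (g := fun n => (21/25:ℝ)^n * phi (y₀ - x))
    · intro n
      have hd : dist (Y n) x ≤ phi (Y n - x) := by
        rw [dist_pi_le_iff (phi_nonneg _)]
        intro i
        rw [Real.dist_eq]
        have : Y n i - x i = (Y n - x) i := rfl
        rw [this]
        exact abs_le_phi _ i
      exact hd.trans (hYdist n)
    · have h1 : Filter.Tendsto (fun n => (21/25:ℝ)^n) Filter.atTop (nhds 0) :=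
        tendsto_pow_atTop_nhds_zero_of_lt_one (by norm_num) (by norm_num)
      have := h1.mul_const (phi (y₀ - x))
      simpa using this
  exact hTcp.isClosed.mem_of_tendsto htend (Filter.Eventually.of_forall hYT)

section five
variable {A B : ℤ} {T : Set (Fin 2 → ℝ)}
variable (hA : 4 ≤ A) (hBA : B = 2*A - 3)
    (hT : (M' A B).mulVec '' T =
      ⋃ j ∈ Set.Icc (0 : ℤ) (B - 1), (fun x => x + (j : ℝ) • e1) '' T)
    (hTne : T.Nonempty) (hTcp : IsCompact T)

include hA hBA hT hTne hTcp

lemma SZ_C1 : SZ A B T (A-1) 1 := by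
  have hA' : (4:ℝ) ≤ (A:ℝ) := by exact_mod_cast hA
  have hB' : (B:ℝ) = 2*(A:ℝ) - 3 := by rw [hBA]; push_cast; ring
  have hBne : (B:ℝ) ≠ 0 := by rw [hB']; intro h; linarith
  have hs : (3*(A:ℝ) - 2) ≠ 0 := by intro h; linarith
  have h23 : (2*(A:ℝ) - 3) ≠ 0 := by intro h; linarith
  have hc : (6 - (A:ℝ)*13 + (A:ℝ)^2*6) ≠ 0 := by nlinarith
  have hs' : ((A:ℝ)*3 - 2) ≠ 0 := by intro h; linarith
  have h23' : ((A:ℝ)*2 - 3) ≠ 0 := by intro h; linarith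
  refine ⟨![-(A:ℝ)*(2*A-3)/(3*A-2), -(2*(A:ℝ)-2)/(3*A-2)],
    fix_mem hA hBA hT hTne hTcp (j₁ := A-2) (j₂ := 0)
      (by simp only [Set.mem_Icc]; omega) (by simp only [Set.mem_Icc]; omega) ?_,
    fix_mem hA hBA hT hTne hTcp (j₁ := 0) (j₂ := A-2)
      (by simp only [Set.mem_Icc]; omega) (by simp only [Set.mem_Icc]; omega) ?_⟩ <;>
  · funext i
    fin_cases i <;>
      (simp [Kinv, e1, rv, Matrix.mulVec, dotProduct, Fin.sum_univ_two,
        Matrix.vecHead, Matrix.vecTail, Function.comp, hB']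
       push_cast
       field_simp [hc, hs', h23']
       ring)

lemma SZ_C2 : SZ A B T (B+1) 2 := by
  have hA' : (4:ℝ) ≤ (A:ℝ) := by exact_mod_cast hA
  have hB' : (B:ℝ) = 2*(A:ℝ) - 3 := by rw [hBA]; push_cast; ring
  have hBne : (B:ℝ) ≠ 0 := by rw [hB']; intro h; linarith
  have hs : (3*(A:ℝ) - 2) ≠ 0 := by intro h; linarith
  have h23 : (2*(A:ℝ) - 3) ≠ 0 := by intro h; linarith
  have hc : (6 - (A:ℝ)*13 + (A:ℝ)^2*6) ≠ 0 := by nlinarith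
  have hs' : ((A:ℝ)*3 - 2) ≠ 0 := by intro h; linarith
  have h23' : ((A:ℝ)*2 - 3) ≠ 0 := by intro h; linarith
  refine ⟨![-2*(A:ℝ)*(2*A-3)/(3*A-2), -(4*(A:ℝ)-4)/(3*A-2)],
    fix_mem hA hBA hT hTne hTcp (j₁ := B-1) (j₂ := 0)
      (by simp only [Set.mem_Icc]; omega) (by simp only [Set.mem_Icc]; omega) ?_,
    fix_mem hA hBA hT hTne hTcp (j₁ := 0) (j₂ := B-1)
      (by simp only [Set.mem_Icc]; omega) (by simp only [Set.mem_Icc]; omega) ?_⟩ <;>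
  · funext i
    fin_cases i <;>
      (simp [Kinv, e1, rv, Matrix.mulVec, dotProduct, Fin.sum_univ_two,
        Matrix.vecHead, Matrix.vecTail, Function.comp, hB']
       push_cast
       field_simp [hc, hs', h23']
       ring)

lemma SZ_10 : SZ A B T 1 0 := by
  have hBne : (B:ℝ) ≠ 0 := by
    have h5 : (5:ℤ) ≤ B := by omega
    have : (5:ℝ) ≤ (B:ℝ) := by exact_mod_cast h5
    intro h; rw [h] at this; linarith
  apply SZ_pre hT hBne (δ := A-1) (p := 1) (q := 0) (by rw [abs_le]; omega)
  have h := SZ_C1 hA hBA hT hTne hTcp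
  have e1'' : -B*0 + (A-1) = A-1 := by ring
  have e2'' : 1 - A*0 = 1 := by ring
  rw [e1'', e2'']
  exact h

lemma SZ_A1 : SZ A B T A 1 := by
  have hBne : (B:ℝ) ≠ 0 := by
    have h5 : (5:ℤ) ≤ B := by omega
    have : (5:ℝ) ≤ (B:ℝ) := by exact_mod_cast h5
    intro h; rw [h] at this; linarith
  apply SZ_pre hT hBne (δ := B-1) (p := A) (q := 1) (by rw [abs_le]; omega)
  have h := SZ_neg (SZ_10 hA hBA hT hTne hTcp)
  have e1'' : -B*1 + (B-1) = -1 := by ring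
  have e2'' : A - A*1 = 0 := by ring
  rw [e1'', e2'']
  have : -(0:ℤ) = 0 := by ring
  rw [this] at h
  exact h

lemma SZ_Am2 : SZ A B T (A-2) 1 := by
  have hBne : (B:ℝ) ≠ 0 := by
    have h5 : (5:ℤ) ≤ B := by omega
    have : (5:ℝ) ≤ (B:ℝ) := by exact_mod_cast h5
    intro h; rw [h] at this; linarith
  apply SZ_pre hT hBne (δ := -1) (p := A-2) (q := 1) (by rw [abs_le]; omega)
  have h := SZ_neg (SZ_C2 hA hBA hT hTne hTcp)
  have e1'' : -B*1 + (-1) = -(B+1) := by ring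
  have e2'' : (A-2) - A*1 = -2 := by ring
  rw [e1'', e2'']
  exact h

end five

/-- For `0 < A ≤ B`, `B ≥ 2`, `2A - B = 3`, `A ≠ B`, and digits
with `a₁ - a₁' = 1` and `a₂ - a₂' = A - 1`, the pieces `T_{a₁a₂a₃a₄}` and
`T_{a₁'a₂'a₃'a₄'}` intersect iff one of three digit constellations holds. -/
theorem subPiece_four_inter_Aminus1
    (A B : ℤ) (hA : 0 < A) (hAB : A ≤ B) (hB : 2 ≤ B)
    (h3 : 2 * A - B = 3) (hABne : A ≠ B)
    (T : Set (Fin 2 → ℝ)) (hTne : T.Nonempty) (hTcp : IsCompact T)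
    (hT : (M' A B).mulVec '' T =
      ⋃ j ∈ Set.Icc (0 : ℤ) (B - 1), (fun x => x + (j : ℝ) • e1) '' T)
    (a₁ a₂ a₃ a₄ a₁' a₂' a₃' a₄' : ℤ)
    (ha₁ : a₁ ∈ Set.Icc (0 : ℤ) (B - 1)) (ha₂ : a₂ ∈ Set.Icc (0 : ℤ) (B - 1))
    (ha₃ : a₃ ∈ Set.Icc (0 : ℤ) (B - 1)) (ha₄ : a₄ ∈ Set.Icc (0 : ℤ) (B - 1))
    (ha₁' : a₁' ∈ Set.Icc (0 : ℤ) (B - 1)) (ha₂' : a₂' ∈ Set.Icc (0 : ℤ) (B - 1))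
    (ha₃' : a₃' ∈ Set.Icc (0 : ℤ) (B - 1)) (ha₄' : a₄' ∈ Set.Icc (0 : ℤ) (B - 1))
    (hd1 : a₁ - a₁' = 1) (hd2 : a₂ - a₂' = A - 1) :
    (subPiece A B T ![a₁, a₂, a₃, a₄] ∩ subPiece A B T ![a₁', a₂', a₃', a₄']).Nonempty ↔
      ((a₃ - a₃' = B - A ∧ a₄ = 0 ∧ a₄' = B - 1) ∨
       (a₃ - a₃' = B - A + 1 ∧
         (a₄ - a₄' = A - B ∨ a₄ - a₄' = A - B - 1 ∨ a₄ - a₄' = A - B - 2)) ∨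
       (a₃ - a₃' = B - A + 2 ∧ a₄ - a₄' = 1)) := by
  have hA4 : 4 ≤ A := by
    rcases eq_or_lt_of_le hAB with h | h
    · exact absurd h hABne
    · omega
  have hBA : B = 2*A - 3 := by omega
  have hBne : (B:ℝ) ≠ 0 := by
    have h5 : (2:ℤ) ≤ B := hB
    have : (2:ℝ) ≤ (B:ℝ) := by exact_mod_cast h5
    intro h; rw [h] at this; linarith
  simp only [Set.mem_Icc] at ha₁ ha₂ ha₃ ha₄ ha₁' ha₂' ha₃' ha₄'
  -- the reduction
  have hiff : (subPiece A B T ![a₁, a₂, a₃, a₄] ∩ subPiece A B T ![a₁', a₂', a₃', a₄']).Nonempty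
      ↔ SZ A B T (B + (a₄ - a₄')) (A - B + (a₃ - a₃')) := by
    have hMK : (M' A B)^4 * ((M' A B)⁻¹)^4 = 1 := by
      have h1 : (M' A B) * (M' A B)⁻¹ = 1 := by
        rw [Minv_eq A B hBne]; exact K_mul_Kinv A B hBne
      have h2 : (M' A B)⁻¹ * (M' A B) = 1 := by
        rw [Minv_eq A B hBne]; exact Kinv_mul_K A B hBne
      have hcomm : Commute (M' A B) (M' A B)⁻¹ := by
        unfold Commute SemiconjBy
        rw [h1, h2]
      rw [← hcomm.mul_pow, h1, one_pow]
    have injQ : ∀ u v : Fin 2 → ℝ,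
        (((M' A B)⁻¹)^4).mulVec u = (((M' A B)⁻¹)^4).mulVec v → u = v := by
      intro u v h
      have h2 := congrArg (fun w => ((M' A B)^4).mulVec w) h
      simp only [Matrix.mulVec_mulVec] at h2
      rw [hMK] at h2
      simpa [Matrix.one_mulVec] using h2
    constructor
    · rintro ⟨z, ⟨x, hx, hzx⟩, ⟨y, hy, hzy⟩⟩
      refine ⟨x, hx, ?_⟩
      have hk := key A B hBne a₁ a₂ a₃ a₄ a₁' a₂' a₃' a₄' hd1 hd2 x
      rw [← hzy] at hzx
      -- hzx : map' y = map x ; combine with key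
      have : (∑ i : Fin 4, ((M' A B)⁻¹ ^ ((i:ℕ)+1)).mulVec ((![a₁',a₂',a₃',a₄'] i : ℝ) • e1))
          + ((M' A B)⁻¹ ^ 4).mulVec (x + rv (B + (a₄ - a₄')) (A - B + (a₃ - a₃')))
          = (∑ i : Fin 4, ((M' A B)⁻¹ ^ ((i:ℕ)+1)).mulVec ((![a₁',a₂',a₃',a₄'] i : ℝ) • e1))
          + ((M' A B)⁻¹ ^ 4).mulVec y := by
        rw [hk]
        exact hzx
      have heq := add_left_cancel this
      have := injQ _ _ heq
      rw [this]
      exact hy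
    · rintro ⟨x, hx, hxv⟩
      refine ⟨(fun y => (∑ i : Fin 4, ((M' A B)⁻¹ ^ ((i:ℕ)+1)).mulVec
          ((![a₁,a₂,a₃,a₄] i : ℝ) • e1)) + ((M' A B)⁻¹ ^ 4).mulVec y) x, ⟨x, hx, rfl⟩, ?_⟩
      refine ⟨x + rv (B + (a₄ - a₄')) (A - B + (a₃ - a₃')), hxv, ?_⟩
      exact key A B hBne a₁ a₂ a₃ a₄ a₁' a₂' a₃' a₄' hd1 hd2 x
  rw [hiff]
  constructor
  · intro hSZ
    -- build the chain
    obtain ⟨δ₀, hδ₀, h₁⟩ := SZ_step hT hSZ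
    obtain ⟨δ₁, hδ₁, h₂⟩ := SZ_step hT h₁
    obtain ⟨δ₂, hδ₂, h₃⟩ := SZ_step hT h₂
    obtain ⟨δ₃, hδ₃, h₄⟩ := SZ_step hT h₃
    set p0 := B + (a₄ - a₄') with hp0
    set q0 := A - B + (a₃ - a₃') with hq0def
    set q1 := p0 - A*q0 with hq1def
    set q2 := -B*q0 + δ₀ - A*q1 with hq2def
    set q3 := -B*q1 + δ₁ - A*q2 with hq3def
    set q4 := -B*q2 + δ₂ - A*q3 with hq4def
    have b0 : |q0| ≤ 3 := SZ_q_le3 hA4 hBA hT hTcp hSZ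
    have b1 : |q1| ≤ 3 := SZ_q_le3 hA4 hBA hT hTcp h₁
    have b2 : |q2| ≤ 3 := SZ_q_le3 hA4 hBA hT hTcp h₂
    have b3 : |q3| ≤ 3 := SZ_q_le3 hA4 hBA hT hTcp h₃
    have b4 : |q4| ≤ 3 := SZ_q_le3 hA4 hBA hT hTcp h₄
    have e0 : B*q0 + A*q1 + q2 = δ₀ := by rw [hq2def]; ring
    have e1'' : B*q1 + A*q2 + q3 = δ₁ := by rw [hq3def]; ring
    have e2'' : B*q2 + A*q3 + q4 = δ₂ := by rw [hq4def]; ring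
    have h0' : |B*q0 + A*q1 + q2| ≤ B - 1 := by rw [e0]; exact hδ₀
    have h1' : |B*q1 + A*q2 + q3| ≤ B - 1 := by rw [e1'']; exact hδ₁
    have h2' : |B*q2 + A*q3 + q4| ≤ B - 1 := by rw [e2'']; exact hδ₂
    have hE := E11 A B q0 q1 q2 q3 q4 hA4 hBA b0 b1 b2 b3 b4 h0' h1' h2'
    rcases hE with ⟨hq0, hq1l, hq1r⟩ | ⟨hq0, hq1l, hq1r⟩ | ⟨hq0, hq1l, hq1r⟩ |
      ⟨hq0, hq1⟩ | ⟨hq0, hq1⟩ <;>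
    · rw [hq0] at hq1def
      rw [hq0def] at hq0
      omega
  · intro hgood
    rcases hgood with ⟨h3', h4, h4'⟩ | ⟨h3', h4s⟩ | ⟨h3', h4'⟩
    · have e1'' : B + (a₄ - a₄') = 1 := by omega
      have e2'' : A - B + (a₃ - a₃') = 0 := by omega
      rw [e1'', e2'']
      exact SZ_10 hA4 hBA hT hTne hTcp
    · have e2'' : A - B + (a₃ - a₃') = 1 := by omega
      rw [e2'']
      rcases h4s with h4 | h4 | h4
      · have e1'' : B + (a₄ - a₄') = A := by omega
        rw [e1'']
        exact SZ_A1 hA4 hBA hT hTne hTcp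
      · have e1'' : B + (a₄ - a₄') = A - 1 := by omega
        rw [e1'']
        exact SZ_C1 hA4 hBA hT hTne hTcp
      · have e1'' : B + (a₄ - a₄') = A - 2 := by omega
        rw [e1'']
        exact SZ_Am2 hA4 hBA hT hTne hTcp
    · have e1'' : B + (a₄ - a₄') = B + 1 := by omega
      have e2'' : A - B + (a₃ - a₃') = 2 := by omega
      rw [e1'', e2'']
      exact SZ_C2 hA4 hBA hT hTne hTcp

end
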